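/- For every integer k ≥ 1, there exists a dual graph of type (4, 4k+4) whose diameter is at least 6k; that is, μ(4, 4k+4) ≥ 6k. -/

import Mathlib

open SimpleGraph

/-- The graph on a family `V` of subsets of `{1,…,n}` in which two distinct
members are adjacent iff their intersection has `d - 1` elements
(property (ii) of a dual graph of type `(d,n)`). -/
def adjGraph (n d : ℕ) (V : Finset (Finset (Fin n))) :
    SimpleGraph {u : Finset (Fin n) // u ∈ V} where
  Adj u v := u ≠ v ∧ (u.1 ∩ v.1).card = d - 1
  symm := by
    refine ⟨?_⟩
    rintro u v ⟨h1, h2⟩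
    exact ⟨h1.symm, by rwa [Finset.inter_comm]⟩
  loopless := ⟨fun u h => h.1 rfl⟩

/-- `V` is (the vertex set of) a dual graph of type `(d,n)`:
a nonempty family of `d`-element subsets of `{1,…,n}` such that, with adjacency
given by property (ii), any two vertices `u`, `v` are joined by a walk all of
whose vertices contain `u ∩ v` (property (i)). -/
structure IsDualGraph (d n : ℕ) (V : Finset (Finset (Fin n))) : Prop where
  nonempty : V.Nonempty
  card_eq : ∀ u ∈ V, u.card = d
  locally_connected : ∀ u v : {x : Finset (Fin n) // x ∈ V},
    ∃ w : (adjGraph n d V).Walk u v, ∀ x ∈ w.support, u.1 ∩ v.1 ⊆ x.1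


namespace MuGlue
open Finset SimpleGraph

def Af : Finset (Fin 8) := {0,1,2,3}
def Bf : Finset (Fin 8) := {4,5,6,7}

def G8 : List (Finset (Fin 8)) :=
  [{0,1,2,3}, {0,1,2,7}, {0,1,3,6}, {0,2,4,6}, {0,2,4,7}, {0,2,5,6}, {0,3,4,6}, {0,3,4,7}, {0,3,5,7}, {0,5,6,7}, {1,2,4,6}, {1,2,5,6}, {1,2,5,7}, {1,3,4,7}, {1,3,5,6}, {1,3,5,7}, {1,4,6,7}, {4,5,6,7}]

def h8 (g : Finset (Fin 8)) : Nat :=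
  if g = ({0,1,2,3} : Finset (Fin 8)) then 0 else
  if g = ({0,1,2,7} : Finset (Fin 8)) then 1 else
  if g = ({0,1,3,6} : Finset (Fin 8)) then 1 else
  if g = ({0,2,4,6} : Finset (Fin 8)) then 3 else
  if g = ({0,2,4,7} : Finset (Fin 8)) then 2 else
  if g = ({0,2,5,6} : Finset (Fin 8)) then 4 else
  if g = ({0,3,4,6} : Finset (Fin 8)) then 2 else
  if g = ({0,3,4,7} : Finset (Fin 8)) then 3 else
  if g = ({0,3,5,7} : Finset (Fin 8)) then 4 else
  if g = ({0,5,6,7} : Finset (Fin 8)) then 5 else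
  if g = ({1,2,4,6} : Finset (Fin 8)) then 4 else
  if g = ({1,2,5,6} : Finset (Fin 8)) then 3 else
  if g = ({1,2,5,7} : Finset (Fin 8)) then 2 else
  if g = ({1,3,4,7} : Finset (Fin 8)) then 4 else
  if g = ({1,3,5,6} : Finset (Fin 8)) then 2 else
  if g = ({1,3,5,7} : Finset (Fin 8)) then 3 else
  if g = ({1,4,6,7} : Finset (Fin 8)) then 5 else
  6

def route8 (u v : Finset (Fin 8)) : List (Finset (Fin 8)) :=
  if u = ({0,1,2,3} : Finset (Fin 8)) then (
    if v = ({0,1,2,7} : Finset (Fin 8)) then [] else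
    if v = ({0,1,3,6} : Finset (Fin 8)) then [] else
    if v = ({0,2,4,6} : Finset (Fin 8)) then [{0,1,2,7}, {0,2,4,7}] else
    if v = ({0,2,4,7} : Finset (Fin 8)) then [{0,1,2,7}] else
    if v = ({0,2,5,6} : Finset (Fin 8)) then [{0,1,2,7}, {0,2,4,7}, {0,2,4,6}] else
    if v = ({0,3,4,6} : Finset (Fin 8)) then [{0,1,3,6}] else
    if v = ({0,3,4,7} : Finset (Fin 8)) then [{0,1,3,6}, {0,3,4,6}] else
    if v = ({0,3,5,7} : Finset (Fin 8)) then [{0,1,3,6}, {0,3,4,6}, {0,3,4,7}] else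
    if v = ({0,5,6,7} : Finset (Fin 8)) then [{0,1,2,7}, {0,2,4,7}, {0,2,4,6}, {0,2,5,6}] else
    if v = ({1,2,4,6} : Finset (Fin 8)) then [{0,1,2,7}, {1,2,5,7}, {1,2,5,6}] else
    if v = ({1,2,5,6} : Finset (Fin 8)) then [{0,1,2,7}, {1,2,5,7}] else
    if v = ({1,2,5,7} : Finset (Fin 8)) then [{0,1,2,7}] else
    if v = ({1,3,4,7} : Finset (Fin 8)) then [{0,1,3,6}, {1,3,5,6}, {1,3,5,7}] else
    if v = ({1,3,5,6} : Finset (Fin 8)) then [{0,1,3,6}] else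
    if v = ({1,3,5,7} : Finset (Fin 8)) then [{0,1,3,6}, {1,3,5,6}] else
    if v = ({1,4,6,7} : Finset (Fin 8)) then [{0,1,2,7}, {1,2,5,7}, {1,2,5,6}, {1,2,4,6}] else
    if v = ({4,5,6,7} : Finset (Fin 8)) then [{0,1,2,7}, {0,2,4,7}, {0,2,4,6}, {0,2,5,6}, {0,5,6,7}] else
    []) else
  if u = ({0,1,2,7} : Finset (Fin 8)) then (
    if v = ({0,1,2,3} : Finset (Fin 8)) then [] else
    if v = ({0,1,3,6} : Finset (Fin 8)) then [{0,1,2,3}] else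
    if v = ({0,2,4,6} : Finset (Fin 8)) then [{0,2,4,7}] else
    if v = ({0,2,4,7} : Finset (Fin 8)) then [] else
    if v = ({0,2,5,6} : Finset (Fin 8)) then [{0,2,4,7}, {0,2,4,6}] else
    if v = ({0,3,4,6} : Finset (Fin 8)) then [{0,1,2,3}, {0,1,3,6}] else
    if v = ({0,3,4,7} : Finset (Fin 8)) then [{0,2,4,7}] else
    if v = ({0,3,5,7} : Finset (Fin 8)) then [{0,2,4,7}, {0,3,4,7}] else
    if v = ({0,5,6,7} : Finset (Fin 8)) then [{0,2,4,7}, {0,3,4,7}, {0,3,5,7}] else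
    if v = ({1,2,4,6} : Finset (Fin 8)) then [{1,2,5,7}, {1,2,5,6}] else
    if v = ({1,2,5,6} : Finset (Fin 8)) then [{1,2,5,7}] else
    if v = ({1,2,5,7} : Finset (Fin 8)) then [] else
    if v = ({1,3,4,7} : Finset (Fin 8)) then [{1,2,5,7}, {1,3,5,7}] else
    if v = ({1,3,5,6} : Finset (Fin 8)) then [{0,1,2,3}, {0,1,3,6}] else
    if v = ({1,3,5,7} : Finset (Fin 8)) then [{1,2,5,7}] else
    if v = ({1,4,6,7} : Finset (Fin 8)) then [{1,2,5,7}, {1,3,5,7}, {1,3,4,7}] else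
    if v = ({4,5,6,7} : Finset (Fin 8)) then [{0,2,4,7}, {0,3,4,7}, {0,3,5,7}, {0,5,6,7}] else
    []) else
  if u = ({0,1,3,6} : Finset (Fin 8)) then (
    if v = ({0,1,2,3} : Finset (Fin 8)) then [] else
    if v = ({0,1,2,7} : Finset (Fin 8)) then [{0,1,2,3}] else
    if v = ({0,2,4,6} : Finset (Fin 8)) then [{0,3,4,6}] else
    if v = ({0,2,4,7} : Finset (Fin 8)) then [{0,1,2,3}, {0,1,2,7}] else
    if v = ({0,2,5,6} : Finset (Fin 8)) then [{0,3,4,6}, {0,2,4,6}] else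
    if v = ({0,3,4,6} : Finset (Fin 8)) then [] else
    if v = ({0,3,4,7} : Finset (Fin 8)) then [{0,3,4,6}] else
    if v = ({0,3,5,7} : Finset (Fin 8)) then [{0,3,4,6}, {0,3,4,7}] else
    if v = ({0,5,6,7} : Finset (Fin 8)) then [{0,3,4,6}, {0,2,4,6}, {0,2,5,6}] else
    if v = ({1,2,4,6} : Finset (Fin 8)) then [{1,3,5,6}, {1,2,5,6}] else
    if v = ({1,2,5,6} : Finset (Fin 8)) then [{1,3,5,6}] else
    if v = ({1,2,5,7} : Finset (Fin 8)) then [{0,1,2,3}, {0,1,2,7}] else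
    if v = ({1,3,4,7} : Finset (Fin 8)) then [{1,3,5,6}, {1,3,5,7}] else
    if v = ({1,3,5,6} : Finset (Fin 8)) then [] else
    if v = ({1,3,5,7} : Finset (Fin 8)) then [{1,3,5,6}] else
    if v = ({1,4,6,7} : Finset (Fin 8)) then [{1,3,5,6}, {1,2,5,6}, {1,2,4,6}] else
    if v = ({4,5,6,7} : Finset (Fin 8)) then [{0,3,4,6}, {0,2,4,6}, {0,2,5,6}, {0,5,6,7}] else
    []) else
  if u = ({0,2,4,6} : Finset (Fin 8)) then (
    if v = ({0,1,2,3} : Finset (Fin 8)) then [{0,2,4,7}, {0,1,2,7}] else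
    if v = ({0,1,2,7} : Finset (Fin 8)) then [{0,2,4,7}] else
    if v = ({0,1,3,6} : Finset (Fin 8)) then [{0,3,4,6}] else
    if v = ({0,2,4,7} : Finset (Fin 8)) then [] else
    if v = ({0,2,5,6} : Finset (Fin 8)) then [] else
    if v = ({0,3,4,6} : Finset (Fin 8)) then [] else
    if v = ({0,3,4,7} : Finset (Fin 8)) then [{0,2,4,7}] else
    if v = ({0,3,5,7} : Finset (Fin 8)) then [{0,2,4,7}, {0,3,4,7}] else
    if v = ({0,5,6,7} : Finset (Fin 8)) then [{0,2,5,6}] else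
    if v = ({1,2,4,6} : Finset (Fin 8)) then [] else
    if v = ({1,2,5,6} : Finset (Fin 8)) then [{0,2,5,6}] else
    if v = ({1,2,5,7} : Finset (Fin 8)) then [{0,2,4,7}, {0,1,2,7}] else
    if v = ({1,3,4,7} : Finset (Fin 8)) then [{0,2,4,7}, {0,3,4,7}] else
    if v = ({1,3,5,6} : Finset (Fin 8)) then [{0,2,5,6}, {1,2,5,6}] else
    if v = ({1,3,5,7} : Finset (Fin 8)) then [{0,2,4,7}, {0,1,2,7}, {1,2,5,7}] else
    if v = ({1,4,6,7} : Finset (Fin 8)) then [{1,2,4,6}] else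
    if v = ({4,5,6,7} : Finset (Fin 8)) then [{1,2,4,6}, {1,4,6,7}] else
    []) else
  if u = ({0,2,4,7} : Finset (Fin 8)) then (
    if v = ({0,1,2,3} : Finset (Fin 8)) then [{0,1,2,7}] else
    if v = ({0,1,2,7} : Finset (Fin 8)) then [] else
    if v = ({0,1,3,6} : Finset (Fin 8)) then [{0,1,2,7}, {0,1,2,3}] else
    if v = ({0,2,4,6} : Finset (Fin 8)) then [] else
    if v = ({0,2,5,6} : Finset (Fin 8)) then [{0,2,4,6}] else
    if v = ({0,3,4,6} : Finset (Fin 8)) then [{0,2,4,6}] else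
    if v = ({0,3,4,7} : Finset (Fin 8)) then [] else
    if v = ({0,3,5,7} : Finset (Fin 8)) then [{0,3,4,7}] else
    if v = ({0,5,6,7} : Finset (Fin 8)) then [{0,3,4,7}, {0,3,5,7}] else
    if v = ({1,2,4,6} : Finset (Fin 8)) then [{0,2,4,6}] else
    if v = ({1,2,5,6} : Finset (Fin 8)) then [{0,1,2,7}, {1,2,5,7}] else
    if v = ({1,2,5,7} : Finset (Fin 8)) then [{0,1,2,7}] else
    if v = ({1,3,4,7} : Finset (Fin 8)) then [{0,3,4,7}] else
    if v = ({1,3,5,6} : Finset (Fin 8)) then [{0,1,2,7}, {0,1,2,3}, {0,1,3,6}] else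
    if v = ({1,3,5,7} : Finset (Fin 8)) then [{0,1,2,7}, {1,2,5,7}] else
    if v = ({1,4,6,7} : Finset (Fin 8)) then [{0,3,4,7}, {1,3,4,7}] else
    if v = ({4,5,6,7} : Finset (Fin 8)) then [{0,3,4,7}, {1,3,4,7}, {1,4,6,7}] else
    []) else
  if u = ({0,2,5,6} : Finset (Fin 8)) then (
    if v = ({0,1,2,3} : Finset (Fin 8)) then [{0,2,4,6}, {0,2,4,7}, {0,1,2,7}] else
    if v = ({0,1,2,7} : Finset (Fin 8)) then [{0,2,4,6}, {0,2,4,7}] else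
    if v = ({0,1,3,6} : Finset (Fin 8)) then [{0,2,4,6}, {0,3,4,6}] else
    if v = ({0,2,4,6} : Finset (Fin 8)) then [] else
    if v = ({0,2,4,7} : Finset (Fin 8)) then [{0,2,4,6}] else
    if v = ({0,3,4,6} : Finset (Fin 8)) then [{0,2,4,6}] else
    if v = ({0,3,4,7} : Finset (Fin 8)) then [{0,2,4,6}, {0,2,4,7}] else
    if v = ({0,3,5,7} : Finset (Fin 8)) then [{0,5,6,7}] else
    if v = ({0,5,6,7} : Finset (Fin 8)) then [] else
    if v = ({1,2,4,6} : Finset (Fin 8)) then [{0,2,4,6}] else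
    if v = ({1,2,5,6} : Finset (Fin 8)) then [] else
    if v = ({1,2,5,7} : Finset (Fin 8)) then [{1,2,5,6}] else
    if v = ({1,3,4,7} : Finset (Fin 8)) then [{0,2,4,6}, {0,2,4,7}, {0,3,4,7}] else
    if v = ({1,3,5,6} : Finset (Fin 8)) then [{1,2,5,6}] else
    if v = ({1,3,5,7} : Finset (Fin 8)) then [{0,5,6,7}, {0,3,5,7}] else
    if v = ({1,4,6,7} : Finset (Fin 8)) then [{0,2,4,6}, {1,2,4,6}] else
    if v = ({4,5,6,7} : Finset (Fin 8)) then [{0,5,6,7}] else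
    []) else
  if u = ({0,3,4,6} : Finset (Fin 8)) then (
    if v = ({0,1,2,3} : Finset (Fin 8)) then [{0,1,3,6}] else
    if v = ({0,1,2,7} : Finset (Fin 8)) then [{0,1,3,6}, {0,1,2,3}] else
    if v = ({0,1,3,6} : Finset (Fin 8)) then [] else
    if v = ({0,2,4,6} : Finset (Fin 8)) then [] else
    if v = ({0,2,4,7} : Finset (Fin 8)) then [{0,2,4,6}] else
    if v = ({0,2,5,6} : Finset (Fin 8)) then [{0,2,4,6}] else
    if v = ({0,3,4,7} : Finset (Fin 8)) then [] else
    if v = ({0,3,5,7} : Finset (Fin 8)) then [{0,3,4,7}] else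
    if v = ({0,5,6,7} : Finset (Fin 8)) then [{0,2,4,6}, {0,2,5,6}] else
    if v = ({1,2,4,6} : Finset (Fin 8)) then [{0,2,4,6}] else
    if v = ({1,2,5,6} : Finset (Fin 8)) then [{0,1,3,6}, {1,3,5,6}] else
    if v = ({1,2,5,7} : Finset (Fin 8)) then [{0,1,3,6}, {0,1,2,3}, {0,1,2,7}] else
    if v = ({1,3,4,7} : Finset (Fin 8)) then [{0,3,4,7}] else
    if v = ({1,3,5,6} : Finset (Fin 8)) then [{0,1,3,6}] else
    if v = ({1,3,5,7} : Finset (Fin 8)) then [{0,1,3,6}, {1,3,5,6}] else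
    if v = ({1,4,6,7} : Finset (Fin 8)) then [{0,2,4,6}, {1,2,4,6}] else
    if v = ({4,5,6,7} : Finset (Fin 8)) then [{0,2,4,6}, {1,2,4,6}, {1,4,6,7}] else
    []) else
  if u = ({0,3,4,7} : Finset (Fin 8)) then (
    if v = ({0,1,2,3} : Finset (Fin 8)) then [{0,3,4,6}, {0,1,3,6}] else
    if v = ({0,1,2,7} : Finset (Fin 8)) then [{0,2,4,7}] else
    if v = ({0,1,3,6} : Finset (Fin 8)) then [{0,3,4,6}] else
    if v = ({0,2,4,6} : Finset (Fin 8)) then [{0,2,4,7}] else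
    if v = ({0,2,4,7} : Finset (Fin 8)) then [] else
    if v = ({0,2,5,6} : Finset (Fin 8)) then [{0,2,4,7}, {0,2,4,6}] else
    if v = ({0,3,4,6} : Finset (Fin 8)) then [] else
    if v = ({0,3,5,7} : Finset (Fin 8)) then [] else
    if v = ({0,5,6,7} : Finset (Fin 8)) then [{0,3,5,7}] else
    if v = ({1,2,4,6} : Finset (Fin 8)) then [{0,2,4,7}, {0,2,4,6}] else
    if v = ({1,2,5,6} : Finset (Fin 8)) then [{0,2,4,7}, {0,1,2,7}, {1,2,5,7}] else
    if v = ({1,2,5,7} : Finset (Fin 8)) then [{0,2,4,7}, {0,1,2,7}] else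
    if v = ({1,3,4,7} : Finset (Fin 8)) then [] else
    if v = ({1,3,5,6} : Finset (Fin 8)) then [{0,3,4,6}, {0,1,3,6}] else
    if v = ({1,3,5,7} : Finset (Fin 8)) then [{0,3,5,7}] else
    if v = ({1,4,6,7} : Finset (Fin 8)) then [{1,3,4,7}] else
    if v = ({4,5,6,7} : Finset (Fin 8)) then [{1,3,4,7}, {1,4,6,7}] else
    []) else
  if u = ({0,3,5,7} : Finset (Fin 8)) then (
    if v = ({0,1,2,3} : Finset (Fin 8)) then [{0,3,4,7}, {0,3,4,6}, {0,1,3,6}] else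
    if v = ({0,1,2,7} : Finset (Fin 8)) then [{0,3,4,7}, {0,2,4,7}] else
    if v = ({0,1,3,6} : Finset (Fin 8)) then [{0,3,4,7}, {0,3,4,6}] else
    if v = ({0,2,4,6} : Finset (Fin 8)) then [{0,3,4,7}, {0,2,4,7}] else
    if v = ({0,2,4,7} : Finset (Fin 8)) then [{0,3,4,7}] else
    if v = ({0,2,5,6} : Finset (Fin 8)) then [{0,5,6,7}] else
    if v = ({0,3,4,6} : Finset (Fin 8)) then [{0,3,4,7}] else
    if v = ({0,3,4,7} : Finset (Fin 8)) then [] else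
    if v = ({0,5,6,7} : Finset (Fin 8)) then [] else
    if v = ({1,2,4,6} : Finset (Fin 8)) then [{0,3,4,7}, {0,2,4,7}, {0,2,4,6}] else
    if v = ({1,2,5,6} : Finset (Fin 8)) then [{0,5,6,7}, {0,2,5,6}] else
    if v = ({1,2,5,7} : Finset (Fin 8)) then [{1,3,5,7}] else
    if v = ({1,3,4,7} : Finset (Fin 8)) then [{0,3,4,7}] else
    if v = ({1,3,5,6} : Finset (Fin 8)) then [{1,3,5,7}] else
    if v = ({1,3,5,7} : Finset (Fin 8)) then [] else
    if v = ({1,4,6,7} : Finset (Fin 8)) then [{0,3,4,7}, {1,3,4,7}] else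
    if v = ({4,5,6,7} : Finset (Fin 8)) then [{0,5,6,7}] else
    []) else
  if u = ({0,5,6,7} : Finset (Fin 8)) then (
    if v = ({0,1,2,3} : Finset (Fin 8)) then [{0,2,5,6}, {0,2,4,6}, {0,2,4,7}, {0,1,2,7}] else
    if v = ({0,1,2,7} : Finset (Fin 8)) then [{0,3,5,7}, {0,3,4,7}, {0,2,4,7}] else
    if v = ({0,1,3,6} : Finset (Fin 8)) then [{0,2,5,6}, {0,2,4,6}, {0,3,4,6}] else
    if v = ({0,2,4,6} : Finset (Fin 8)) then [{0,2,5,6}] else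
    if v = ({0,2,4,7} : Finset (Fin 8)) then [{0,3,5,7}, {0,3,4,7}] else
    if v = ({0,2,5,6} : Finset (Fin 8)) then [] else
    if v = ({0,3,4,6} : Finset (Fin 8)) then [{0,2,5,6}, {0,2,4,6}] else
    if v = ({0,3,4,7} : Finset (Fin 8)) then [{0,3,5,7}] else
    if v = ({0,3,5,7} : Finset (Fin 8)) then [] else
    if v = ({1,2,4,6} : Finset (Fin 8)) then [{0,2,5,6}, {0,2,4,6}] else
    if v = ({1,2,5,6} : Finset (Fin 8)) then [{0,2,5,6}] else
    if v = ({1,2,5,7} : Finset (Fin 8)) then [{0,3,5,7}, {1,3,5,7}] else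
    if v = ({1,3,4,7} : Finset (Fin 8)) then [{0,3,5,7}, {0,3,4,7}] else
    if v = ({1,3,5,6} : Finset (Fin 8)) then [{0,2,5,6}, {1,2,5,6}] else
    if v = ({1,3,5,7} : Finset (Fin 8)) then [{0,3,5,7}] else
    if v = ({1,4,6,7} : Finset (Fin 8)) then [{4,5,6,7}] else
    if v = ({4,5,6,7} : Finset (Fin 8)) then [] else
    []) else
  if u = ({1,2,4,6} : Finset (Fin 8)) then (
    if v = ({0,1,2,3} : Finset (Fin 8)) then [{1,2,5,6}, {1,2,5,7}, {0,1,2,7}] else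
    if v = ({0,1,2,7} : Finset (Fin 8)) then [{1,2,5,6}, {1,2,5,7}] else
    if v = ({0,1,3,6} : Finset (Fin 8)) then [{1,2,5,6}, {1,3,5,6}] else
    if v = ({0,2,4,6} : Finset (Fin 8)) then [] else
    if v = ({0,2,4,7} : Finset (Fin 8)) then [{0,2,4,6}] else
    if v = ({0,2,5,6} : Finset (Fin 8)) then [{0,2,4,6}] else
    if v = ({0,3,4,6} : Finset (Fin 8)) then [{0,2,4,6}] else
    if v = ({0,3,4,7} : Finset (Fin 8)) then [{0,2,4,6}, {0,2,4,7}] else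
    if v = ({0,3,5,7} : Finset (Fin 8)) then [{0,2,4,6}, {0,2,4,7}, {0,3,4,7}] else
    if v = ({0,5,6,7} : Finset (Fin 8)) then [{0,2,4,6}, {0,2,5,6}] else
    if v = ({1,2,5,6} : Finset (Fin 8)) then [] else
    if v = ({1,2,5,7} : Finset (Fin 8)) then [{1,2,5,6}] else
    if v = ({1,3,4,7} : Finset (Fin 8)) then [{1,4,6,7}] else
    if v = ({1,3,5,6} : Finset (Fin 8)) then [{1,2,5,6}] else
    if v = ({1,3,5,7} : Finset (Fin 8)) then [{1,2,5,6}, {1,2,5,7}] else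
    if v = ({1,4,6,7} : Finset (Fin 8)) then [] else
    if v = ({4,5,6,7} : Finset (Fin 8)) then [{1,4,6,7}] else
    []) else
  if u = ({1,2,5,6} : Finset (Fin 8)) then (
    if v = ({0,1,2,3} : Finset (Fin 8)) then [{1,2,5,7}, {0,1,2,7}] else
    if v = ({0,1,2,7} : Finset (Fin 8)) then [{1,2,5,7}] else
    if v = ({0,1,3,6} : Finset (Fin 8)) then [{1,3,5,6}] else
    if v = ({0,2,4,6} : Finset (Fin 8)) then [{0,2,5,6}] else
    if v = ({0,2,4,7} : Finset (Fin 8)) then [{0,2,5,6}, {0,2,4,6}] else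
    if v = ({0,2,5,6} : Finset (Fin 8)) then [] else
    if v = ({0,3,4,6} : Finset (Fin 8)) then [{0,2,5,6}, {0,2,4,6}] else
    if v = ({0,3,4,7} : Finset (Fin 8)) then [{0,2,5,6}, {0,2,4,6}, {0,2,4,7}] else
    if v = ({0,3,5,7} : Finset (Fin 8)) then [{0,2,5,6}, {0,5,6,7}] else
    if v = ({0,5,6,7} : Finset (Fin 8)) then [{0,2,5,6}] else
    if v = ({1,2,4,6} : Finset (Fin 8)) then [] else
    if v = ({1,2,5,7} : Finset (Fin 8)) then [] else
    if v = ({1,3,4,7} : Finset (Fin 8)) then [{1,2,4,6}, {1,4,6,7}] else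
    if v = ({1,3,5,6} : Finset (Fin 8)) then [] else
    if v = ({1,3,5,7} : Finset (Fin 8)) then [{1,2,5,7}] else
    if v = ({1,4,6,7} : Finset (Fin 8)) then [{1,2,4,6}] else
    if v = ({4,5,6,7} : Finset (Fin 8)) then [{0,2,5,6}, {0,5,6,7}] else
    []) else
  if u = ({1,2,5,7} : Finset (Fin 8)) then (
    if v = ({0,1,2,3} : Finset (Fin 8)) then [{0,1,2,7}] else
    if v = ({0,1,2,7} : Finset (Fin 8)) then [] else
    if v = ({0,1,3,6} : Finset (Fin 8)) then [{0,1,2,7}, {0,1,2,3}] else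
    if v = ({0,2,4,6} : Finset (Fin 8)) then [{0,1,2,7}, {0,2,4,7}] else
    if v = ({0,2,4,7} : Finset (Fin 8)) then [{0,1,2,7}] else
    if v = ({0,2,5,6} : Finset (Fin 8)) then [{1,2,5,6}] else
    if v = ({0,3,4,6} : Finset (Fin 8)) then [{0,1,2,7}, {0,1,2,3}, {0,1,3,6}] else
    if v = ({0,3,4,7} : Finset (Fin 8)) then [{0,1,2,7}, {0,2,4,7}] else
    if v = ({0,3,5,7} : Finset (Fin 8)) then [{1,3,5,7}] else
    if v = ({0,5,6,7} : Finset (Fin 8)) then [{1,3,5,7}, {0,3,5,7}] else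
    if v = ({1,2,4,6} : Finset (Fin 8)) then [{1,2,5,6}] else
    if v = ({1,2,5,6} : Finset (Fin 8)) then [] else
    if v = ({1,3,4,7} : Finset (Fin 8)) then [{1,3,5,7}] else
    if v = ({1,3,5,6} : Finset (Fin 8)) then [{1,2,5,6}] else
    if v = ({1,3,5,7} : Finset (Fin 8)) then [] else
    if v = ({1,4,6,7} : Finset (Fin 8)) then [{1,3,5,7}, {1,3,4,7}] else
    if v = ({4,5,6,7} : Finset (Fin 8)) then [{1,3,5,7}, {0,3,5,7}, {0,5,6,7}] else
    []) else
  if u = ({1,3,4,7} : Finset (Fin 8)) then (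
    if v = ({0,1,2,3} : Finset (Fin 8)) then [{1,3,5,7}, {1,3,5,6}, {0,1,3,6}] else
    if v = ({0,1,2,7} : Finset (Fin 8)) then [{1,3,5,7}, {1,2,5,7}] else
    if v = ({0,1,3,6} : Finset (Fin 8)) then [{1,3,5,7}, {1,3,5,6}] else
    if v = ({0,2,4,6} : Finset (Fin 8)) then [{0,3,4,7}, {0,2,4,7}] else
    if v = ({0,2,4,7} : Finset (Fin 8)) then [{0,3,4,7}] else
    if v = ({0,2,5,6} : Finset (Fin 8)) then [{0,3,4,7}, {0,2,4,7}, {0,2,4,6}] else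
    if v = ({0,3,4,6} : Finset (Fin 8)) then [{0,3,4,7}] else
    if v = ({0,3,4,7} : Finset (Fin 8)) then [] else
    if v = ({0,3,5,7} : Finset (Fin 8)) then [{0,3,4,7}] else
    if v = ({0,5,6,7} : Finset (Fin 8)) then [{0,3,4,7}, {0,3,5,7}] else
    if v = ({1,2,4,6} : Finset (Fin 8)) then [{1,4,6,7}] else
    if v = ({1,2,5,6} : Finset (Fin 8)) then [{1,3,5,7}, {1,2,5,7}] else
    if v = ({1,2,5,7} : Finset (Fin 8)) then [{1,3,5,7}] else
    if v = ({1,3,5,6} : Finset (Fin 8)) then [{1,3,5,7}] else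
    if v = ({1,3,5,7} : Finset (Fin 8)) then [] else
    if v = ({1,4,6,7} : Finset (Fin 8)) then [] else
    if v = ({4,5,6,7} : Finset (Fin 8)) then [{1,4,6,7}] else
    []) else
  if u = ({1,3,5,6} : Finset (Fin 8)) then (
    if v = ({0,1,2,3} : Finset (Fin 8)) then [{0,1,3,6}] else
    if v = ({0,1,2,7} : Finset (Fin 8)) then [{0,1,3,6}, {0,1,2,3}] else
    if v = ({0,1,3,6} : Finset (Fin 8)) then [] else
    if v = ({0,2,4,6} : Finset (Fin 8)) then [{0,1,3,6}, {0,3,4,6}] else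
    if v = ({0,2,4,7} : Finset (Fin 8)) then [{0,1,3,6}, {0,1,2,3}, {0,1,2,7}] else
    if v = ({0,2,5,6} : Finset (Fin 8)) then [{1,2,5,6}] else
    if v = ({0,3,4,6} : Finset (Fin 8)) then [{0,1,3,6}] else
    if v = ({0,3,4,7} : Finset (Fin 8)) then [{0,1,3,6}, {0,3,4,6}] else
    if v = ({0,3,5,7} : Finset (Fin 8)) then [{1,3,5,7}] else
    if v = ({0,5,6,7} : Finset (Fin 8)) then [{1,2,5,6}, {0,2,5,6}] else
    if v = ({1,2,4,6} : Finset (Fin 8)) then [{1,2,5,6}] else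
    if v = ({1,2,5,6} : Finset (Fin 8)) then [] else
    if v = ({1,2,5,7} : Finset (Fin 8)) then [{1,2,5,6}] else
    if v = ({1,3,4,7} : Finset (Fin 8)) then [{1,3,5,7}] else
    if v = ({1,3,5,7} : Finset (Fin 8)) then [] else
    if v = ({1,4,6,7} : Finset (Fin 8)) then [{1,2,5,6}, {1,2,4,6}] else
    if v = ({4,5,6,7} : Finset (Fin 8)) then [{1,2,5,6}, {0,2,5,6}, {0,5,6,7}] else
    []) else
  if u = ({1,3,5,7} : Finset (Fin 8)) then (
    if v = ({0,1,2,3} : Finset (Fin 8)) then [{1,3,5,6}, {0,1,3,6}] else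
    if v = ({0,1,2,7} : Finset (Fin 8)) then [{1,2,5,7}] else
    if v = ({0,1,3,6} : Finset (Fin 8)) then [{1,3,5,6}] else
    if v = ({0,2,4,6} : Finset (Fin 8)) then [{0,3,5,7}, {0,3,4,7}, {0,2,4,7}] else
    if v = ({0,2,4,7} : Finset (Fin 8)) then [{0,3,5,7}, {0,3,4,7}] else
    if v = ({0,2,5,6} : Finset (Fin 8)) then [{0,3,5,7}, {0,5,6,7}] else
    if v = ({0,3,4,6} : Finset (Fin 8)) then [{0,3,5,7}, {0,3,4,7}] else
    if v = ({0,3,4,7} : Finset (Fin 8)) then [{0,3,5,7}] else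
    if v = ({0,3,5,7} : Finset (Fin 8)) then [] else
    if v = ({0,5,6,7} : Finset (Fin 8)) then [{0,3,5,7}] else
    if v = ({1,2,4,6} : Finset (Fin 8)) then [{1,2,5,7}, {1,2,5,6}] else
    if v = ({1,2,5,6} : Finset (Fin 8)) then [{1,2,5,7}] else
    if v = ({1,2,5,7} : Finset (Fin 8)) then [] else
    if v = ({1,3,4,7} : Finset (Fin 8)) then [] else
    if v = ({1,3,5,6} : Finset (Fin 8)) then [] else
    if v = ({1,4,6,7} : Finset (Fin 8)) then [{1,3,4,7}] else
    if v = ({4,5,6,7} : Finset (Fin 8)) then [{0,3,5,7}, {0,5,6,7}] else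
    []) else
  if u = ({1,4,6,7} : Finset (Fin 8)) then (
    if v = ({0,1,2,3} : Finset (Fin 8)) then [{1,2,4,6}, {1,2,5,6}, {1,2,5,7}, {0,1,2,7}] else
    if v = ({0,1,2,7} : Finset (Fin 8)) then [{1,3,4,7}, {1,3,5,7}, {1,2,5,7}] else
    if v = ({0,1,3,6} : Finset (Fin 8)) then [{1,2,4,6}, {1,2,5,6}, {1,3,5,6}] else
    if v = ({0,2,4,6} : Finset (Fin 8)) then [{1,2,4,6}] else
    if v = ({0,2,4,7} : Finset (Fin 8)) then [{1,3,4,7}, {0,3,4,7}] else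
    if v = ({0,2,5,6} : Finset (Fin 8)) then [{1,2,4,6}, {0,2,4,6}] else
    if v = ({0,3,4,6} : Finset (Fin 8)) then [{1,2,4,6}, {0,2,4,6}] else
    if v = ({0,3,4,7} : Finset (Fin 8)) then [{1,3,4,7}] else
    if v = ({0,3,5,7} : Finset (Fin 8)) then [{1,3,4,7}, {0,3,4,7}] else
    if v = ({0,5,6,7} : Finset (Fin 8)) then [{4,5,6,7}] else
    if v = ({1,2,4,6} : Finset (Fin 8)) then [] else
    if v = ({1,2,5,6} : Finset (Fin 8)) then [{1,2,4,6}] else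
    if v = ({1,2,5,7} : Finset (Fin 8)) then [{1,3,4,7}, {1,3,5,7}] else
    if v = ({1,3,4,7} : Finset (Fin 8)) then [] else
    if v = ({1,3,5,6} : Finset (Fin 8)) then [{1,2,4,6}, {1,2,5,6}] else
    if v = ({1,3,5,7} : Finset (Fin 8)) then [{1,3,4,7}] else
    if v = ({4,5,6,7} : Finset (Fin 8)) then [] else
    []) else
  if u = ({4,5,6,7} : Finset (Fin 8)) then (
    if v = ({0,1,2,3} : Finset (Fin 8)) then [{0,5,6,7}, {0,2,5,6}, {0,2,4,6}, {0,2,4,7}, {0,1,2,7}] else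
    if v = ({0,1,2,7} : Finset (Fin 8)) then [{0,5,6,7}, {0,3,5,7}, {0,3,4,7}, {0,2,4,7}] else
    if v = ({0,1,3,6} : Finset (Fin 8)) then [{0,5,6,7}, {0,2,5,6}, {0,2,4,6}, {0,3,4,6}] else
    if v = ({0,2,4,6} : Finset (Fin 8)) then [{1,4,6,7}, {1,2,4,6}] else
    if v = ({0,2,4,7} : Finset (Fin 8)) then [{1,4,6,7}, {1,3,4,7}, {0,3,4,7}] else
    if v = ({0,2,5,6} : Finset (Fin 8)) then [{0,5,6,7}] else
    if v = ({0,3,4,6} : Finset (Fin 8)) then [{1,4,6,7}, {1,2,4,6}, {0,2,4,6}] else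
    if v = ({0,3,4,7} : Finset (Fin 8)) then [{1,4,6,7}, {1,3,4,7}] else
    if v = ({0,3,5,7} : Finset (Fin 8)) then [{0,5,6,7}] else
    if v = ({0,5,6,7} : Finset (Fin 8)) then [] else
    if v = ({1,2,4,6} : Finset (Fin 8)) then [{1,4,6,7}] else
    if v = ({1,2,5,6} : Finset (Fin 8)) then [{0,5,6,7}, {0,2,5,6}] else
    if v = ({1,2,5,7} : Finset (Fin 8)) then [{0,5,6,7}, {0,3,5,7}, {1,3,5,7}] else
    if v = ({1,3,4,7} : Finset (Fin 8)) then [{1,4,6,7}] else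
    if v = ({1,3,5,6} : Finset (Fin 8)) then [{0,5,6,7}, {0,2,5,6}, {1,2,5,6}] else
    if v = ({1,3,5,7} : Finset (Fin 8)) then [{0,5,6,7}, {0,3,5,7}] else
    if v = ({1,4,6,7} : Finset (Fin 8)) then [] else
    []) else
  []

abbrev adjP (a b : Finset (Fin 8)) : Prop := a ≠ b ∧ (a ∩ b).card = 3

set_option maxRecDepth 1000000

def adj8 (u v : Finset (Fin 8)) : Bool := u ≠ v && (u ∩ v).card = 3

def chainOK (S : Finset (Fin 8)) : List (Finset (Fin 8)) → Bool
  | [] => true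
  | [x] => x ∈ G8 && S ⊆ x
  | x :: y :: t => (x ∈ G8 && S ⊆ x) && adj8 x y && chainOK S (y :: t)

theorem routes_ok_b : ∀ u ∈ G8, ∀ v ∈ G8, u ≠ v →
    chainOK (u ∩ v) (u :: (route8 u v ++ [v])) = true := by
  decide

lemma chainOK_spec (S : Finset (Fin 8)) : ∀ (L : List (Finset (Fin 8))),
    chainOK S L = true → (∀ x ∈ L, x ∈ G8 ∧ S ⊆ x) ∧ L.Chain' adjP
  | [] => by
    intro _
    exact ⟨by simp, List.isChain_nil⟩
  | [x] => by
    intro h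
    simp only [chainOK, Bool.and_eq_true, decide_eq_true_eq] at h
    refine ⟨?_, List.isChain_singleton x⟩
    intro z hz
    rw [List.mem_singleton] at hz
    subst hz
    exact h
  | x :: y :: t => by
    intro h
    simp only [chainOK, Bool.and_eq_true, decide_eq_true_eq] at h
    obtain ⟨⟨⟨hxG, hxS⟩, hadj⟩, hrest⟩ := h
    obtain ⟨hmem, hch⟩ := chainOK_spec S (y :: t) hrest
    constructor
    · intro z hz
      rcases List.mem_cons.1 hz with rfl | hz
      · exact ⟨hxG, hxS⟩
      · exact hmem z hz
    · rw [List.Chain', List.isChain_cons_cons]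
      refine ⟨?_, hch⟩
      simpa only [adj8, Bool.and_eq_true, decide_eq_true_eq] using hadj

theorem routes_ok : ∀ u ∈ G8, ∀ v ∈ G8, u ≠ v →
    (u :: (route8 u v ++ [v])).Chain' adjP ∧ ∀ x ∈ route8 u v, x ∈ G8 ∧ u ∩ v ⊆ x := by
  intro u hu v hv hne
  have h := chainOK_spec (u ∩ v) _ (routes_ok_b u hu v hv hne)
  exact ⟨h.2, fun x hx => h.1 x (List.mem_cons_of_mem _ (List.mem_append_left _ hx))⟩

theorem h8_ok : ∀ u ∈ G8, ∀ v ∈ G8, (u ∩ v).card = 3 → h8 u ≤ h8 v + 1 := by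
  decide

theorem g8_card : ∀ g ∈ G8, g.card = 4 := by decide
theorem A_mem : Af ∈ G8 := by decide
theorem B_mem : Bf ∈ G8 := by decide
theorem h8_A : h8 Af = 0 := by decide
theorem h8_B : h8 Bf = 6 := by decide
theorem portB_fact : ∀ g ∈ G8, 3 ≤ (g ∩ Bf).card → g = Bf ∨ ((6 : Fin 8) ∈ g ∧ (7 : Fin 8) ∈ g) := by
  decide
theorem portA_fact : ∀ g ∈ G8, 3 ≤ (g ∩ Af).card → g = Af ∨ ¬((2 : Fin 8) ∈ g ∧ (3 : Fin 8) ∈ g) := by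
  decide
theorem mem_Bf : ∀ a : Fin 8, a ∈ Bf ↔ 4 ≤ a.val := by decide
theorem mem_Af : ∀ a : Fin 8, a ∈ Af ↔ a.val < 4 := by decide

/-! ### Embeddings of the gadget -/

def emb (k j : ℕ) (a : Fin 8) : Fin (4 * k + 4) :=
  if h : j < k then ⟨4 * j + a.val, by have := a.isLt; omega⟩ else ⟨0, by omega⟩

lemma emb_val {k j : ℕ} (h : j < k) (a : Fin 8) : (emb k j a).val = 4 * j + a.val := by
  simp [emb, h]

lemma emb_inj {k j : ℕ} (h : j < k) : Function.Injective (emb k j) := by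
  intro a b hab
  have := congrArg Fin.val hab
  rw [emb_val h, emb_val h] at this
  exact Fin.ext (by omega)

def fm (k j : ℕ) (g : Finset (Fin 8)) : Finset (Fin (4 * k + 4)) := g.image (emb k j)

lemma fm_inter {k j : ℕ} (h : j < k) (g g' : Finset (Fin 8)) :
    fm k j (g ∩ g') = fm k j g ∩ fm k j g' :=
  Finset.image_inter g g' (emb_inj h)

lemma fm_card {k j : ℕ} (h : j < k) (g : Finset (Fin 8)) : (fm k j g).card = g.card :=
  Finset.card_image_of_injective g (emb_inj h)

lemma fm_injective {k j : ℕ} (h : j < k) {g g' : Finset (Fin 8)} (he : fm k j g = fm k j g') :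
    g = g' := Finset.image_injective (emb_inj h) he

lemma fm_window {k j : ℕ} (h : j < k) {g : Finset (Fin 8)} {x : Fin (4 * k + 4)}
    (hx : x ∈ fm k j g) : 4 * j ≤ x.val ∧ x.val < 4 * j + 8 := by
  obtain ⟨a, _, rfl⟩ := Finset.mem_image.1 hx
  rw [emb_val h]
  have := a.isLt
  omega

lemma mem_fm_Bf {k j : ℕ} (h : j < k) {x : Fin (4 * k + 4)}
    (h1 : 4 * j + 4 ≤ x.val) (h2 : x.val < 4 * j + 8) : x ∈ fm k j Bf := by
  refine Finset.mem_image.2 ⟨⟨x.val - 4 * j, by omega⟩, ?_, ?_⟩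
  · rw [mem_Bf]; simp; omega
  · apply Fin.ext; rw [emb_val h]; simp; omega

lemma mem_fm_Af {k j : ℕ} (h : j < k) {x : Fin (4 * k + 4)}
    (h1 : 4 * j ≤ x.val) (h2 : x.val < 4 * j + 4) : x ∈ fm k j Af := by
  refine Finset.mem_image.2 ⟨⟨x.val - 4 * j, by omega⟩, ?_, ?_⟩
  · rw [mem_Af]; simp; omega
  · apply Fin.ext; rw [emb_val h]; simp; omega

lemma port_eq {k j : ℕ} (h : j + 1 < k) : fm k j Bf = fm k (j + 1) Af := by
  ext x
  constructor
  · intro hx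
    obtain ⟨a, ha, rfl⟩ := Finset.mem_image.1 hx
    have hav := (mem_Bf a).1 ha
    have := a.isLt
    exact mem_fm_Af h (by rw [emb_val (by omega)]; omega) (by rw [emb_val (by omega)]; omega)
  · intro hx
    obtain ⟨a, ha, rfl⟩ := Finset.mem_image.1 hx
    have hav := (mem_Af a).1 ha
    exact mem_fm_Bf (by omega) (by rw [emb_val h]; omega) (by rw [emb_val h]; have := a.isLt; omega)

def Vk (k : ℕ) : Finset (Finset (Fin (4 * k + 4))) :=
  (Finset.range k).biUnion fun j => G8.toFinset.image (fm k j)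

lemma mem_Vk {k : ℕ} {u : Finset (Fin (4 * k + 4))} :
    u ∈ Vk k ↔ ∃ j, j < k ∧ ∃ g ∈ G8, u = fm k j g := by
  simp only [Vk, Finset.mem_biUnion, Finset.mem_range, Finset.mem_image, List.mem_toFinset]
  constructor
  · rintro ⟨j, hj, g, hg, rfl⟩; exact ⟨j, hj, g, hg, rfl⟩
  · rintro ⟨j, hj, g, hg, rfl⟩; exact ⟨j, hj, g, hg, rfl⟩

lemma fm_mem_Vk {k j : ℕ} (hj : j < k) {g : Finset (Fin 8)} (hg : g ∈ G8) :
    fm k j g ∈ Vk k := mem_Vk.2 ⟨j, hj, g, hg, rfl⟩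

/-! ### Building walks -/

lemma walk_of_chain {n : ℕ} {V : Finset (Finset (Fin n))} (S : Finset (Fin n)) :
    ∀ (l : List (Finset (Fin n))) (u v : {x : Finset (Fin n) // x ∈ V}),
    List.Chain (fun a b => a ≠ b ∧ (a ∩ b).card = 3) u.1 (l ++ [v.1]) →
    (∀ x ∈ l, x ∈ V ∧ S ⊆ x) → S ⊆ u.1 → S ⊆ v.1 →
    ∃ w : (adjGraph n 4 V).Walk u v, ∀ x ∈ w.support, S ⊆ x.1
  | [], u, v, hc, _, hu, hv => by
    rw [List.nil_append, List.Chain, List.chain_cons] at hc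
    have hadj : (adjGraph n 4 V).Adj u v :=
      ⟨fun h => hc.1.1 (congrArg Subtype.val h), hc.1.2⟩
    refine ⟨Walk.cons hadj Walk.nil, ?_⟩
    intro x hx
    rw [Walk.support_cons, List.mem_cons] at hx
    rcases hx with h | h
    · subst h; exact hu
    · rw [Walk.support_nil, List.mem_singleton] at h; subst h; exact hv
  | a :: l, u, v, hc, hmem, hu, hv => by
    rw [List.cons_append, List.Chain, List.chain_cons] at hc
    have ha := hmem a List.mem_cons_self
    have hadj : (adjGraph n 4 V).Adj u ⟨a, ha.1⟩ :=
      ⟨fun h => hc.1.1 (congrArg Subtype.val h), hc.1.2⟩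
    obtain ⟨w, hw⟩ := walk_of_chain S l ⟨a, ha.1⟩ v hc.2
      (fun x hx => hmem x (List.mem_cons_of_mem _ hx)) ha.2 hv
    refine ⟨Walk.cons hadj w, ?_⟩
    intro x hx
    rw [Walk.support_cons, List.mem_cons] at hx
    rcases hx with h | h
    · subst h; exact hu
    · exact hw x h

lemma gadget_walk {k j : ℕ} (hj : j < k) {g g' : Finset (Fin 8)} (hg : g ∈ G8) (hg' : g' ∈ G8)
    (u v : {x : Finset (Fin (4 * k + 4)) // x ∈ Vk k})
    (hu : u.1 = fm k j g) (hv : v.1 = fm k j g')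
    (S : Finset (Fin (4 * k + 4))) (hS : S ⊆ fm k j (g ∩ g')) :
    ∃ w : (adjGraph (4 * k + 4) 4 (Vk k)).Walk u v, ∀ x ∈ w.support, S ⊆ x.1 := by
  by_cases hgg : g = g'
  · subst hgg
    have huv : u = v := Subtype.ext (hu.trans hv.symm)
    subst huv
    refine ⟨Walk.nil, ?_⟩
    intro x hx
    rw [Walk.support_nil, List.mem_singleton] at hx
    subst hx
    rw [hu]
    calc S ⊆ fm k j (g ∩ g) := hS
    _ ⊆ fm k j g := by rw [Finset.inter_self]
  · obtain ⟨hchain, hmem⟩ := routes_ok g hg g' hg' hgg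
    have hSu : S ⊆ u.1 := by
      rw [hu]; exact hS.trans (Finset.image_subset_image Finset.inter_subset_left)
    have hSv : S ⊆ v.1 := by
      rw [hv]; exact hS.trans (Finset.image_subset_image Finset.inter_subset_right)
    refine walk_of_chain S ((route8 g g').map (fm k j)) u v ?_ ?_ hSu hSv
    · -- mapped chain
      have : (u.1 :: ((route8 g g').map (fm k j) ++ [v.1]))
          = (g :: (route8 g g' ++ [g'])).map (fm k j) := by
        simp [hu, hv, fm]
      have hmap : List.Chain' (fun a b => a ≠ b ∧ (a ∩ b).card = 3)
          ((g :: (route8 g g' ++ [g'])).map (fm k j)) := by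
        rw [List.Chain', List.isChain_map]
        refine hchain.imp ?_
        intro a b hab
        refine ⟨fun h => hab.1 (fm_injective hj h), ?_⟩
        rw [← fm_inter hj, fm_card hj, hab.2]
      rw [← this] at hmap
      exact hmap
    · intro x hx
      obtain ⟨y, hy, rfl⟩ := List.mem_map.1 hx
      obtain ⟨hyG, hyS⟩ := hmem y hy
      exact ⟨fm_mem_Vk hj hyG, hS.trans (Finset.image_subset_image hyS)⟩

lemma reach_base {k : ℕ} (hk : 1 ≤ k) :
    ∀ (j : ℕ), j < k → ∀ g ∈ G8, ∀ u : {x : Finset (Fin (4 * k + 4)) // x ∈ Vk k},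
    u.1 = fm k j g →
    Nonempty ((adjGraph (4 * k + 4) 4 (Vk k)).Walk u ⟨fm k 0 Af, fm_mem_Vk hk A_mem⟩)
  | 0, hj, g, hg, u, hu => by
    obtain ⟨w, _⟩ := gadget_walk hj hg A_mem u ⟨fm k 0 Af, fm_mem_Vk hk A_mem⟩ hu rfl
      ∅ (Finset.empty_subset _)
    exact ⟨w⟩
  | (j + 1), hj, g, hg, u, hu => by
    have hj' : j < k := by omega
    have hport : (fm k j Bf : Finset (Fin (4 * k + 4))) = fm k (j + 1) Af := port_eq hj
    obtain ⟨w1, _⟩ := gadget_walk hj hg A_mem u ⟨fm k j Bf, fm_mem_Vk hj' B_mem⟩ hu hport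
      ∅ (Finset.empty_subset _)
    obtain ⟨w2⟩ := reach_base hk j hj' Bf B_mem ⟨fm k j Bf, fm_mem_Vk hj' B_mem⟩ rfl
    exact ⟨w1.append w2⟩

lemma loc_conn_succ {k j : ℕ} (hj1 : j + 1 < k) {g g' : Finset (Fin 8)}
    (hg : g ∈ G8) (hg' : g' ∈ G8)
    (u v : {x : Finset (Fin (4 * k + 4)) // x ∈ Vk k})
    (hu : u.1 = fm k j g) (hv : v.1 = fm k (j + 1) g') :
    ∃ w : (adjGraph (4 * k + 4) 4 (Vk k)).Walk u v, ∀ x ∈ w.support, u.1 ∩ v.1 ⊆ x.1 := by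
  have hj : j < k := by omega
  set S := u.1 ∩ v.1 with hSdef
  have hSP : S ⊆ fm k j Bf := by
    intro x hx
    have hxu := fm_window hj (hu ▸ (Finset.mem_inter.1 hx).1)
    have hxv := fm_window hj1 (hv ▸ (Finset.mem_inter.1 hx).2)
    exact mem_fm_Bf hj (by omega) (by omega)
  have hSu : S ⊆ u.1 := Finset.inter_subset_left
  have hSv : S ⊆ v.1 := Finset.inter_subset_right
  set p : {x : Finset (Fin (4 * k + 4)) // x ∈ Vk k} := ⟨fm k j Bf, fm_mem_Vk hj B_mem⟩ with hp
  obtain ⟨w1, hw1⟩ := gadget_walk hj hg B_mem u p hu rfl S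
    (by rw [fm_inter hj, ← hu]; exact Finset.subset_inter hSu hSP)
  obtain ⟨w2, hw2⟩ := gadget_walk hj1 A_mem hg' p v (port_eq hj1) hv S
    (by rw [fm_inter hj1, ← hv, ← port_eq hj1]; exact Finset.subset_inter hSP hSv)
  refine ⟨w1.append w2, ?_⟩
  intro x hx
  rw [Walk.support_append, List.mem_append] at hx
  rcases hx with h | h
  · exact hw1 x h
  · exact hw2 x (List.mem_of_mem_tail h)

lemma loc_conn {k : ℕ} (hk : 1 ≤ k) :
    ∀ u v : {x : Finset (Fin (4 * k + 4)) // x ∈ Vk k},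
    ∃ w : (adjGraph (4 * k + 4) 4 (Vk k)).Walk u v, ∀ x ∈ w.support, u.1 ∩ v.1 ⊆ x.1 := by
  intro u v
  obtain ⟨j, hj, g, hg, hu⟩ := mem_Vk.1 u.2
  obtain ⟨j', hj', g', hg', hv⟩ := mem_Vk.1 v.2
  rcases (by omega : j' = j ∨ j' = j + 1 ∨ j = j' + 1 ∨ j + 2 ≤ j' ∨ j' + 2 ≤ j) with
    h | h | h | h | h
  · subst h
    obtain ⟨w, hw⟩ := gadget_walk hj hg hg' u v hu hv (u.1 ∩ v.1)
      (by rw [fm_inter hj, ← hu, ← hv])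
    exact ⟨w, hw⟩
  · subst h
    exact loc_conn_succ hj' hg hg' u v hu hv
  · subst h
    obtain ⟨w, hw⟩ := loc_conn_succ hj hg' hg v u hv hu
    refine ⟨w.reverse, ?_⟩
    intro x hx
    rw [Walk.support_reverse, List.mem_reverse] at hx
    rw [Finset.inter_comm]
    exact hw x hx
  all_goals {
    have hempty : u.1 ∩ v.1 = ∅ := by
      rw [Finset.eq_empty_iff_forall_notMem]
      intro x hx
      have h1 := fm_window hj (hu ▸ (Finset.mem_inter.1 hx).1)
      have h2 := fm_window hj' (hv ▸ (Finset.mem_inter.1 hx).2)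
      omega
    obtain ⟨w1⟩ := reach_base hk j hj g hg u hu
    obtain ⟨w2⟩ := reach_base hk j' hj' g' hg' v hv
    refine ⟨w1.append w2.reverse, ?_⟩
    intro x _
    rw [hempty]
    exact Finset.empty_subset _
  }

/-! ### The potential function and the distance lower bound -/

def repP (k : ℕ) (u : Finset (Fin (4 * k + 4))) (m : ℕ) : Prop :=
  ∃ j g, j < k ∧ g ∈ G8 ∧ u = fm k j g ∧ m = 6 * j + h8 g

lemma rep_exists {k : ℕ} (u : {x : Finset (Fin (4 * k + 4)) // x ∈ Vk k}) :
    ∃ m, repP k u.1 m := by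
  obtain ⟨j, hj, g, hg, hu⟩ := mem_Vk.1 u.2
  exact ⟨6 * j + h8 g, j, g, hj, hg, hu, rfl⟩

lemma g8_nonempty {g : Finset (Fin 8)} (hg : g ∈ G8) : g.Nonempty :=
  Finset.card_pos.1 (by rw [g8_card g hg]; omega)

lemma port_forced {k j : ℕ} (hj : j < k) (hj1 : j + 1 < k) {g g' : Finset (Fin 8)}
    (hg : g ∈ G8) (hg' : g' ∈ G8) (he : fm k j g = fm k (j + 1) g') :
    g = Bf ∧ g' = Af := by
  constructor
  · have hsub : g ⊆ Bf := by
      intro a ha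
      have : emb k j a ∈ fm k (j + 1) g' := he ▸ Finset.mem_image_of_mem _ ha
      have hw := fm_window hj1 this
      rw [emb_val hj] at hw
      exact (mem_Bf a).2 (by omega)
    exact Finset.eq_of_subset_of_card_le hsub (by rw [g8_card g hg]; decide)
  · have hsub : g' ⊆ Af := by
      intro a ha
      have : emb k (j + 1) a ∈ fm k j g := he ▸ Finset.mem_image_of_mem _ ha
      have hw := fm_window hj this
      rw [emb_val hj1] at hw
      exact (mem_Af a).2 (by omega)
    exact Finset.eq_of_subset_of_card_le hsub (by rw [g8_card g' hg']; decide)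

lemma rep_unique {k : ℕ} {u : Finset (Fin (4 * k + 4))} {m m' : ℕ}
    (h : repP k u m) (h' : repP k u m') : m = m' := by
  obtain ⟨j, g, hj, hg, rfl, rfl⟩ := h
  obtain ⟨j', g', hj', hg', he, rfl⟩ := h'
  obtain ⟨a, ha⟩ := g8_nonempty hg
  have hmem1 : emb k j a ∈ fm k j g := Finset.mem_image_of_mem _ ha
  have hmem2 : emb k j a ∈ fm k j' g' := by rw [← he]; exact hmem1
  have h1 := fm_window hj hmem1
  have h2 := fm_window hj' hmem2
  rcases (by omega : j = j' ∨ j' = j + 1 ∨ j = j' + 1) with hc | hc | hc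
  · subst hc
    rw [fm_injective hj he]
  · subst hc
    obtain ⟨hB, hA⟩ := port_forced hj hj' hg hg' he
    subst hB; subst hA
    rw [h8_A, h8_B]
    omega
  · subst hc
    obtain ⟨hB, hA⟩ := port_forced hj' hj hg' hg he.symm
    subst hB; subst hA
    rw [h8_A, h8_B]
    omega

lemma common_rep_succ {k j : ℕ} (hj1 : j + 1 < k) {g g' : Finset (Fin 8)}
    (hg : g ∈ G8) (hg' : g' ∈ G8)
    {u v : Finset (Fin (4 * k + 4))}
    (hu : u = fm k j g) (hv : v = fm k (j + 1) g')
    (hcard : (u ∩ v).card = 3) :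
    ∃ J gg gg', J < k ∧ gg ∈ G8 ∧ gg' ∈ G8 ∧ u = fm k J gg ∧ v = fm k J gg' ∧
      6 * j + h8 g = 6 * J + h8 gg ∧ 6 * (j + 1) + h8 g' = 6 * J + h8 gg' := by
  have hj : j < k := by omega
  by_cases hgB : g = Bf
  · subst hgB
    refine ⟨j + 1, Af, g', hj1, A_mem, hg', ?_, hv, ?_, rfl⟩
    · rw [hu, port_eq hj1]
    · rw [h8_A, h8_B]; omega
  by_cases hgA : g' = Af
  · subst hgA
    refine ⟨j, g, Bf, hj, hg, B_mem, hu, ?_, rfl, ?_⟩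
    · rw [hv, ← port_eq hj1]
    · rw [h8_A, h8_B]; omega
  exfalso
  -- u ∩ v is contained in the port
  set S := u ∩ v with hSdef
  have hSP : S ⊆ fm k j Bf := by
    intro x hx
    have hxu := fm_window hj (hu ▸ (Finset.mem_inter.1 hx).1)
    have hxv := fm_window hj1 (hv ▸ (Finset.mem_inter.1 hx).2)
    exact mem_fm_Bf hj (by omega) (by omega)
  have hSu : S ⊆ fm k j (g ∩ Bf) := by
    rw [fm_inter hj, ← hu]
    exact Finset.subset_inter Finset.inter_subset_left hSP
  have hSv : S ⊆ fm k (j + 1) (Af ∩ g') := by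
    rw [fm_inter hj1, ← hv, ← port_eq hj1]
    exact Finset.subset_inter hSP Finset.inter_subset_right
  have hcB : 3 ≤ (g ∩ Bf).card := by
    have := Finset.card_le_card hSu
    rw [fm_card hj] at this
    omega
  have hcA : 3 ≤ (g' ∩ Af).card := by
    have := Finset.card_le_card hSv
    rw [fm_card hj1, Finset.inter_comm] at this
    omega
  have h67 : (6 : Fin 8) ∈ g ∧ (7 : Fin 8) ∈ g := (portB_fact g hg hcB).resolve_left hgB
  have h23 : ¬((2 : Fin 8) ∈ g' ∧ (3 : Fin 8) ∈ g') := (portA_fact g' hg' hcA).resolve_left hgA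
  -- S is exactly the image of g ∩ Bf
  have hcB4 : (g ∩ Bf).card ≤ 3 := by
    by_contra hc
    have h4 : (g ∩ Bf).card = 4 := by
      have := Finset.card_le_card (Finset.inter_subset_left : g ∩ Bf ⊆ g)
      rw [g8_card g hg] at this
      omega
    have : g ⊆ Bf := by
      have heq : g ∩ Bf = g := Finset.eq_of_subset_of_card_le
        (Finset.inter_subset_left) (by rw [g8_card g hg, h4])
      rw [← heq]
      exact Finset.inter_subset_right
    exact hgB (Finset.eq_of_subset_of_card_le this (by rw [g8_card g hg]; decide))
  have hSeq : S = fm k j (g ∩ Bf) :=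
    Finset.eq_of_subset_of_card_le hSu (by rw [fm_card hj]; omega)
  have h6S : emb k j 6 ∈ S := by
    rw [hSeq]
    exact Finset.mem_image_of_mem _ (Finset.mem_inter.2 ⟨h67.1, by decide⟩)
  have h7S : emb k j 7 ∈ S := by
    rw [hSeq]
    exact Finset.mem_image_of_mem _ (Finset.mem_inter.2 ⟨h67.2, by decide⟩)
  apply h23
  constructor
  · have := hSv h6S
    obtain ⟨a, ha, hae⟩ := Finset.mem_image.1 this
    have := congrArg Fin.val hae
    rw [emb_val hj1, emb_val hj] at this
    have hav : a.val = 2 := by simpa using (by omega : a.val = 2)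
    have : a = 2 := Fin.ext (by simpa using hav)
    rw [← this]
    exact (Finset.mem_inter.1 ha).2
  · have := hSv h7S
    obtain ⟨a, ha, hae⟩ := Finset.mem_image.1 this
    have := congrArg Fin.val hae
    rw [emb_val hj1, emb_val hj] at this
    have : a = 3 := Fin.ext (by simpa using (by omega : a.val = 3))
    rw [← this]
    exact (Finset.mem_inter.1 ha).2

lemma common_rep {k : ℕ} {u v : Finset (Fin (4 * k + 4))} {m m' : ℕ}
    (hcard : (u ∩ v).card = 3) (h : repP k u m) (h' : repP k v m') :
    ∃ J gg gg', J < k ∧ gg ∈ G8 ∧ gg' ∈ G8 ∧ u = fm k J gg ∧ v = fm k J gg' ∧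
      m = 6 * J + h8 gg ∧ m' = 6 * J + h8 gg' := by
  obtain ⟨j, g, hj, hg, hu, rfl⟩ := h
  obtain ⟨j', g', hj', hg', hv, rfl⟩ := h'
  have hne : (u ∩ v).Nonempty := Finset.card_pos.1 (by omega)
  obtain ⟨x, hx⟩ := hne
  have h1 := fm_window hj (hu ▸ (Finset.mem_inter.1 hx).1)
  have h2 := fm_window hj' (hv ▸ (Finset.mem_inter.1 hx).2)
  rcases (by omega : j = j' ∨ j' = j + 1 ∨ j = j' + 1) with hc | hc | hc
  · subst hc
    exact ⟨j, g, g', hj, hg, hg', hu, hv, rfl, rfl⟩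
  · subst hc
    obtain ⟨J, gg, gg', hJ, hgg, hgg', h1, h2, h3, h4⟩ :=
      common_rep_succ hj' hg hg' hu hv hcard
    exact ⟨J, gg, gg', hJ, hgg, hgg', h1, h2, h3, h4⟩
  · subst hc
    obtain ⟨J, gg, gg', hJ, hgg, hgg', h1, h2, h3, h4⟩ :=
      common_rep_succ hj hg' hg hv hu (by rwa [Finset.inter_comm])
    exact ⟨J, gg', gg, hJ, hgg', hgg, h2, h1, h4, h3⟩

lemma edge_bound {k : ℕ} {u v : {x : Finset (Fin (4 * k + 4)) // x ∈ Vk k}} {m m' : ℕ}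
    (hadj : (adjGraph (4 * k + 4) 4 (Vk k)).Adj u v)
    (h : repP k u.1 m) (h' : repP k v.1 m') : m' ≤ m + 1 := by
  obtain ⟨hne, hcard⟩ : u ≠ v ∧ (u.1 ∩ v.1).card = 3 := hadj
  obtain ⟨J, gg, gg', hJ, hgg, hgg', h1, h2, h3, h4⟩ := common_rep hcard h h'
  have hggne : gg ≠ gg' := by
    intro hc
    exact hne (Subtype.ext (by rw [h1, h2, hc]))
  have hgcard : (gg ∩ gg').card = 3 := by
    have : (u.1 ∩ v.1).card = (gg ∩ gg').card := by
      rw [h1, h2, ← fm_inter hJ, fm_card hJ]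
    omega
  have := h8_ok gg' hgg' gg hgg (by rwa [Finset.inter_comm])
  omega

lemma walk_bound {k : ℕ} {u v : {x : Finset (Fin (4 * k + 4)) // x ∈ Vk k}}
    (w : (adjGraph (4 * k + 4) 4 (Vk k)).Walk u v) :
    ∀ {m m' : ℕ}, repP k u.1 m → repP k v.1 m' → m' ≤ m + w.length := by
  induction w with
  | nil =>
    intro m m' h h'
    have := rep_unique h h'
    rw [Walk.length_nil]
    omega
  | @cons a b c hadj p ih =>
    intro m m' h h'
    obtain ⟨mb, hb⟩ := rep_exists b
    have e1 := edge_bound hadj h hb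
    have e2 := ih hb h'
    rw [Walk.length_cons]
    omega

end MuGlue

open MuGlue in
/-- μ(4, 4k+4) ≥ 6k for all k ≥ 1. -/
theorem mu_four_glue (k : ℕ) (hk : 1 ≤ k) :
    ∃ V : Finset (Finset (Fin (4 * k + 4))), IsDualGraph 4 (4 * k + 4) V ∧
      6 * k ≤ (adjGraph (4 * k + 4) 4 V).diam := by
  refine ⟨Vk k, ?_, ?_⟩
  case _ =>
    refine ⟨⟨fm k 0 Af, fm_mem_Vk hk A_mem⟩, ?_, loc_conn hk⟩
    intro u hu
    obtain ⟨j, hj, g, hg, rfl⟩ := mem_Vk.1 hu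
    rw [fm_card hj, g8_card g hg]
  case _ =>
    have hconn : (adjGraph (4 * k + 4) 4 (Vk k)).Connected := by
      rw [SimpleGraph.connected_iff]
      refine ⟨fun u v => ?_, ⟨⟨fm k 0 Af, fm_mem_Vk hk A_mem⟩⟩⟩
      obtain ⟨w, _⟩ := loc_conn hk u v
      exact ⟨w⟩
    have : Nonempty {x : Finset (Fin (4 * k + 4)) // x ∈ Vk k} :=
      ⟨⟨fm k 0 Af, fm_mem_Vk hk A_mem⟩⟩
    have hne : (adjGraph (4 * k + 4) 4 (Vk k)).ediam ≠ ⊤ := by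
      obtain ⟨u, v, huv⟩ := SimpleGraph.exists_edist_eq_ediam_of_finite
        (G := adjGraph (4 * k + 4) 4 (Vk k))
      rw [← huv]
      exact SimpleGraph.edist_ne_top_iff_reachable.2 (hconn u v)
    set s : {x : Finset (Fin (4 * k + 4)) // x ∈ Vk k} := ⟨fm k 0 Af, fm_mem_Vk hk A_mem⟩
    set t : {x : Finset (Fin (4 * k + 4)) // x ∈ Vk k} :=
      ⟨fm k (k - 1) Bf, fm_mem_Vk (by omega) B_mem⟩
    have hreps : repP k s.1 0 := ⟨0, Af, by omega, A_mem, rfl, by rw [h8_A]⟩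
    have hrept : repP k t.1 (6 * k) := ⟨k - 1, Bf, by omega, B_mem, rfl, by rw [h8_B]; omega⟩
    obtain ⟨w, hw⟩ := (hconn s t).exists_walk_length_eq_dist
    have hlen := walk_bound w hreps hrept
    calc 6 * k ≤ (adjGraph (4 * k + 4) 4 (Vk k)).dist s t := by omega
    _ ≤ _ := SimpleGraph.dist_le_diam hne
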